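/- The Burchnall-type operational formula: for any n-times complex-differentiable function f, (-1)^n e^{α|z|²} (∂/∂z)ⁿ (z^m e^{-α|z|²} f(z)) = (n!/α^m) Σ_{k=0}^{n} ((-1)^k/(k!(n-k)!)) H_{m,n-k}^α(z, z̄) f^{(k)}(z), where H_{m,n}^α are the Itô–Hermite polynomials. -/

import Mathlib

open Complex MeasureTheory

noncomputable def wdz (f : ℂ → ℂ) (z : ℂ) : ℂ :=
  (1/2) * (fderiv ℝ f z 1 - Complex.I * fderiv ℝ f z Complex.I)

noncomputable def wdzbar (f : ℂ → ℂ) (z : ℂ) : ℂ :=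
  (1/2) * (fderiv ℝ f z 1 + Complex.I * fderiv ℝ f z Complex.I)

/-- The poly-meromorphic Itô–Hermite function `ψ_{n,m}^{α,β}`, defined via the
Rodrigues formula with iterated Wirtinger derivatives and principal-branch powers. -/
noncomputable def psi (α β : ℝ) (n : ℕ) (m : ℤ) (z : ℂ) : ℂ :=
  (-1 : ℂ)^n * z ^ (-(β:ℂ)) * Complex.exp (α * ‖z‖ ^ 2) *
    (wdz^[n] (fun w => w ^ ((β:ℂ) + (m:ℂ)) * Complex.exp (-(α * ‖w‖ ^ 2)))) z

/-- Generalized Laguerre polynomial `L_n^{(γ)}(x)` with complex parameter and argument. -/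
noncomputable def genLaguerre (n : ℕ) (γ : ℂ) (x : ℂ) : ℂ :=
  ∑ k ∈ Finset.range (n+1),
    (-1 : ℂ)^k * (∏ j ∈ Finset.range (n-k), (γ + k + 1 + j)) /
      ((n-k).factorial * k.factorial) * x^k

/-- Itô–Hermite polynomial `H_{p,q}^α(z, z̄)`. -/
noncomputable def IH (α : ℝ) (p q : ℕ) (z : ℂ) : ℂ :=
  (-1 : ℂ)^(p+q) * Complex.exp (α * ‖z‖ ^ 2) *
    (wdzbar^[p] (wdz^[q] (fun w => Complex.exp (-(α * ‖w‖ ^ 2))))) z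

noncomputable def lmap (a b : ℂ) : ℂ →L[ℝ] ℂ :=
  a • (ContinuousLinearMap.id ℝ ℂ) + b • (Complex.conjCLE.toContinuousLinearMap)

@[simp] lemma lmap_apply (a b h : ℂ) : lmap a b h = a * h + b * (starRingEnd ℂ) h := by
  simp [lmap, Complex.conjCLE]

def HasWD (f : ℂ → ℂ) (a b z : ℂ) : Prop := HasFDerivAt f (lmap a b) z

lemma HasWD.wdz_eq {f a b z} (h : HasWD f a b z) : wdz f z = a := by
  have := h.fderiv
  rw [wdz, this]
  simp [lmap_apply, Complex.conj_I]
  ring_nf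
  simp [Complex.I_sq]
  ring

lemma HasWD.wdzbar_eq {f a b z} (h : HasWD f a b z) : wdzbar f z = b := by
  have := h.fderiv
  rw [wdzbar, this]
  simp [lmap_apply, Complex.conj_I]
  ring_nf
  simp [Complex.I_sq]
  ring

lemma HasWD.congr_ab {f a b z a' b'} (h : HasWD f a b z) (ha : a = a') (hb : b = b') :
    HasWD f a' b' z := ha ▸ hb ▸ h

lemma hasWD_const (c z : ℂ) : HasWD (fun _ => c) 0 0 z := by
  have : lmap 0 0 = 0 := by ext h; simp
  unfold HasWD; rw [this]; exact hasFDerivAt_const c z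

lemma hasWD_id (z : ℂ) : HasWD (fun w => w) 1 0 z := by
  have : lmap 1 0 = ContinuousLinearMap.id ℝ ℂ := by ext h; simp
  unfold HasWD; rw [this]; exact hasFDerivAt_id z

lemma HasWD.mul {f g a b c d z} (hf : HasWD f a b z) (hg : HasWD g c d z) :
    HasWD (fun w => f w * g w) (a * g z + f z * c) (b * g z + f z * d) z := by
  have := HasFDerivAt.mul' hf hg
  unfold HasWD
  refine this.congr_fderiv ?_
  ext h
  simp [ContinuousLinearMap.smulRight_apply]
  ring

lemma HasWD.add {f g a b c d z} (hf : HasWD f a b z) (hg : HasWD g c d z) :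
    HasWD (fun w => f w + g w) (a + c) (b + d) z := by
  have := HasFDerivAt.add hf hg
  unfold HasWD
  refine this.congr_fderiv ?_
  ext h; simp; ring

lemma HasWD.star {f a b z} (hf : HasWD f a b z) :
    HasWD (fun w => (starRingEnd ℂ) (f w)) ((starRingEnd ℂ) b) ((starRingEnd ℂ) a) z := by
  unfold HasWD
  have hc : HasFDerivAt (fun w : ℂ => (starRingEnd ℂ) w)
      (Complex.conjCLE.toContinuousLinearMap) (f z) := Complex.conjCLE.hasFDerivAt
  have := hc.comp z hf
  refine this.congr_fderiv ?_
  ext h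
  simp [Function.comp, Complex.conjCLE]
  ring

lemma HasWD.exp_comp {f a b z} (hf : HasWD f a b z) :
    HasWD (fun w => Complex.exp (f w)) (Complex.exp (f z) * a) (Complex.exp (f z) * b) z := by
  unfold HasWD
  have he : HasFDerivAt Complex.exp
      ((ContinuousLinearMap.smulRight (1 : ℂ →L[ℂ] ℂ) (Complex.exp (f z))).restrictScalars ℝ)
      (f z) := (Complex.hasDerivAt_exp (f z)).hasFDerivAt.restrictScalars ℝ
  have := he.comp z hf
  refine this.congr_fderiv ?_
  ext h
  simp [Function.comp]
  ring

lemma HasWD.ofHasDerivAt {f c z} (hf : HasDerivAt f c z) : HasWD f c 0 z := by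
  unfold HasWD
  have := hf.hasFDerivAt.restrictScalars ℝ
  refine this.congr_fderiv ?_
  ext h
  simp
  ring

lemma HasWD.sum {ι : Type*} {s : Finset ι} {F : ι → ℂ → ℂ} {A B : ι → ℂ} {z : ℂ}
    (h : ∀ i ∈ s, HasWD (F i) (A i) (B i) z) :
    HasWD (fun w => ∑ i ∈ s, F i w) (∑ i ∈ s, A i) (∑ i ∈ s, B i) z := by
  unfold HasWD
  have := HasFDerivAt.fun_sum (fun i hi => h i hi)
  refine this.congr_fderiv ?_
  ext h
  simp [Finset.sum_apply, ContinuousLinearMap.sum_apply, Finset.sum_mul, Finset.mul_sum]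
  rw [← Finset.sum_add_distrib]

lemma HasWD.const_mul {f a b z} (c : ℂ) (hf : HasWD f a b z) :
    HasWD (fun w => c * f w) (c * a) (c * b) z :=
  ((hasWD_const c z).mul hf).congr_ab (by ring) (by ring)

lemma wdz_congr {f g : ℂ → ℂ} {z : ℂ} (h : f =ᶠ[nhds z] g) : wdz f z = wdz g z := by
  rw [wdz, wdz, h.fderiv_eq]

section Main
variable (α : ℝ)

noncomputable def Efun : ℂ → ℂ := fun w => Complex.exp (-((α:ℂ) * ((‖w‖ : ℝ) : ℂ) ^ 2))

lemma Efun_eq (w : ℂ) : Efun α w = Complex.exp (-((α:ℂ) * (w * (starRingEnd ℂ) w))) := by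
  rw [Efun]
  congr 2
  rw [Complex.mul_conj]
  norm_cast
  rw [← Complex.sq_norm]

lemma conj_Efun (w : ℂ) : (starRingEnd ℂ) (Efun α w) = Efun α w := by
  rw [Efun, ← Complex.exp_conj]
  congr 1
  simp

lemma hasWD_Efun (z : ℂ) :
    HasWD (Efun α) (-(α:ℂ) * (starRingEnd ℂ) z * Efun α z) (-(α:ℂ) * z * Efun α z) z := by
  have h1 : HasWD (fun w : ℂ => -((α:ℂ) * (w * (starRingEnd ℂ) w)))
      (-(α:ℂ) * (starRingEnd ℂ) z) (-(α:ℂ) * z) z := by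
    have heq : (fun w : ℂ => -((α:ℂ) * (w * (starRingEnd ℂ) w)))
        = fun w : ℂ => (-(α:ℂ)) * (w * (starRingEnd ℂ) w) := by
      funext w; ring
    rw [heq]
    exact (((hasWD_id z).mul ((hasWD_id z).star)).const_mul (-(α:ℂ))).congr_ab
      (by simp) (by simp)
  have h2 := h1.exp_comp
  rw [show (fun w : ℂ => Complex.exp (-((α:ℂ) * (w * (starRingEnd ℂ) w)))) = Efun α
    from funext fun w => (Efun_eq α w).symm] at h2
  refine h2.congr_ab ?_ ?_
  · show Complex.exp (-((α:ℂ) * (z * (starRingEnd ℂ) z))) * (-(α:ℂ) * (starRingEnd ℂ) z)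
      = -(α:ℂ) * (starRingEnd ℂ) z * Efun α z
    rw [← Efun_eq α z]; ring
  · show Complex.exp (-((α:ℂ) * (z * (starRingEnd ℂ) z))) * (-(α:ℂ) * z)
      = -(α:ℂ) * z * Efun α z
    rw [← Efun_eq α z]; ring

noncomputable def efam (q : ℕ) : ℂ → ℂ :=
  fun w => (-(α:ℂ) * (starRingEnd ℂ) w) ^ q * Efun α w

lemma hasWD_efam (q : ℕ) (z : ℂ) :
    ∃ b, HasWD (efam α q) (efam α (q+1) z) b z := by
  have hd : HasDerivAt (fun w : ℂ => (-(α:ℂ) * w) ^ q)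
      ((q:ℂ) * (-(α:ℂ) * z) ^ (q-1) * (-(α:ℂ))) z := by
    simpa using (((hasDerivAt_id z).const_mul (-(α:ℂ))).fun_pow q)
  have hp0 := (HasWD.ofHasDerivAt hd).star
  have hfn : (fun w : ℂ => (starRingEnd ℂ) ((-(α:ℂ) * w) ^ q))
      = fun w : ℂ => (-(α:ℂ) * (starRingEnd ℂ) w) ^ q := by
    funext w; simp
  rw [hfn] at hp0
  refine ⟨_, ((hp0.mul (hasWD_Efun α z)).congr_ab ?_ rfl)⟩
  show (starRingEnd ℂ) 0 * Efun α z +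
      (-(α:ℂ) * (starRingEnd ℂ) z) ^ q * (-(α:ℂ) * (starRingEnd ℂ) z * Efun α z)
    = efam α (q+1) z
  rw [efam, pow_succ]
  simp
  ring

lemma iteratedDeriv_cpow (c : ℂ) (a : ℕ) :
    ∀ j, iteratedDeriv j (fun w : ℂ => c * w ^ a)
      = fun w => c * (a.descFactorial j : ℂ) * w ^ (a - j) := by
  intro j
  induction j with
  | zero => simp
  | succ j ih =>
    rw [iteratedDeriv_succ, ih]
    funext x
    rw [deriv_const_mul _ (differentiableAt_pow _)]
    rw [deriv_pow_field]
    rw [Nat.descFactorial_succ]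
    push_cast
    rw [Nat.sub_sub]
    ring

lemma hasDerivAt_iteratedDeriv_cpow (c : ℂ) (a k : ℕ) (z : ℂ) :
    HasDerivAt (iteratedDeriv k (fun w : ℂ => c * w ^ a))
      (iteratedDeriv (k+1) (fun w : ℂ => c * w ^ a) z) z := by
  rw [iteratedDeriv_cpow, iteratedDeriv_cpow]
  have := ((hasDerivAt_pow (a - k) z).const_mul (c * ((a.descFactorial k : ℕ) : ℂ)))
  refine this.congr_deriv ?_
  rw [Nat.descFactorial_succ]
  push_cast
  rw [Nat.sub_sub]
  ring

lemma holo_hasDerivAt {U : Set ℂ} (hU : IsOpen U) {f : ℂ → ℂ}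
    (hf : DifferentiableOn ℂ f U) :
    ∀ k, ∀ z ∈ U, HasDerivAt (iteratedDeriv k f) (iteratedDeriv (k+1) f z) z := by
  have hdiff : ∀ k, DifferentiableOn ℂ (iteratedDeriv k f) U := by
    intro k
    induction k with
    | zero => simpa using hf
    | succ k ih =>
      rw [iteratedDeriv_succ]
      exact ((ih.analyticOnNhd hU).deriv).differentiableOn
  intro k z hz
  have h1 := ((hdiff k).differentiableAt (hU.mem_nhds hz)).hasDerivAt
  rwa [← iteratedDeriv_succ] at h1

noncomputable def gsum (h : ℕ → ℂ → ℂ) (f : ℂ → ℂ) (q : ℕ) : ℂ → ℂ :=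
  fun w => ∑ k ∈ Finset.range (q+1), (q.choose k : ℂ) * (h (q-k) w * iteratedDeriv k f w)

lemma pascal_sum (H P : ℕ → ℂ) (q : ℕ) :
    ∑ k ∈ Finset.range (q+1), (q.choose k : ℂ) * (H (q-k+1) * P k + H (q-k) * P (k+1))
      = ∑ k ∈ Finset.range (q+2), ((q+1).choose k : ℂ) * (H (q+1-k) * P k) := by
  have hsplit : ∑ k ∈ Finset.range (q+1), (q.choose k : ℂ) * (H (q-k+1) * P k + H (q-k) * P (k+1))
      = (∑ k ∈ Finset.range (q+1), (q.choose k : ℂ) * (H (q-k+1) * P k))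
        + ∑ k ∈ Finset.range (q+1), (q.choose k : ℂ) * (H (q-k) * P (k+1)) := by
    rw [← Finset.sum_add_distrib]
    congr 1; funext k; ring
  rw [hsplit]
  rw [Finset.sum_range_succ' (fun k => ((q+1).choose k : ℂ) * (H (q+1-k) * P k)) (q+1)]
  have hch : ∀ k, (((q+1).choose (k+1) : ℕ) : ℂ) = (q.choose k : ℂ) + (q.choose (k+1) : ℂ) := by
    intro k
    rw [Nat.choose_succ_succ]
    push_cast; ring
  have hexp : ∑ k ∈ Finset.range (q+1), ((q+1).choose (k+1) : ℂ) * (H (q+1-(k+1)) * P (k+1))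
      = (∑ k ∈ Finset.range (q+1), (q.choose k : ℂ) * (H (q-k) * P (k+1)))
        + ∑ k ∈ Finset.range (q+1), (q.choose (k+1) : ℂ) * (H (q-k) * P (k+1)) := by
    rw [← Finset.sum_add_distrib]
    apply Finset.sum_congr rfl
    intro k hk
    rw [hch]
    have : q + 1 - (k+1) = q - k := by omega
    rw [this]
    ring
  rw [hexp]
  have hS1 : ∑ k ∈ Finset.range (q+1), (q.choose k : ℂ) * (H (q-k+1) * P k)
      = (∑ k ∈ Finset.range (q+1), (q.choose (k+1) : ℂ) * (H (q-k) * P (k+1)))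
        + ((q+1).choose 0 : ℂ) * (H (q+1-0) * P 0) := by
    rw [Finset.sum_range_succ' (fun k => (q.choose k : ℂ) * (H (q-k+1) * P k)) q]
    have h1 : ∑ k ∈ Finset.range q, (q.choose (k+1) : ℂ) * (H (q-(k+1)+1) * P (k+1))
        = ∑ k ∈ Finset.range q, (q.choose (k+1) : ℂ) * (H (q-k) * P (k+1)) := by
      apply Finset.sum_congr rfl
      intro k hk
      have hk' : k < q := Finset.mem_range.mp hk
      have : q - (k+1) + 1 = q - k := by omega
      rw [this]
    rw [h1]
    have h2 : ∑ k ∈ Finset.range (q+1), (q.choose (k+1) : ℂ) * (H (q-k) * P (k+1))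
        = ∑ k ∈ Finset.range q, (q.choose (k+1) : ℂ) * (H (q-k) * P (k+1)) := by
      rw [Finset.sum_range_succ]
      simp [Nat.choose_succ_self]
    rw [h2]
    simp
  rw [hS1]
  ring

lemma step_lemma (h : ℕ → ℂ → ℂ) (hh : ∀ j w, ∃ b, HasWD (h j) (h (j+1) w) b w)
    (f : ℂ → ℂ) (z : ℂ)
    (hf : ∀ k, HasDerivAt (iteratedDeriv k f) (iteratedDeriv (k+1) f z) z)
    (q : ℕ) :
    ∃ b, HasWD (gsum h f q) (gsum h f (q+1) z) b z := by
  classical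
  choose B hB using hh
  have hterm : ∀ k ∈ Finset.range (q+1),
      HasWD (fun w => (q.choose k : ℂ) * (h (q-k) w * iteratedDeriv k f w))
        ((q.choose k : ℂ) * (h (q-k+1) z * iteratedDeriv k f z
            + h (q-k) z * iteratedDeriv (k+1) f z))
        ((q.choose k : ℂ) * (B (q-k) z * iteratedDeriv k f z)) z := by
    intro k _
    have hm := (hB (q-k) z).mul (HasWD.ofHasDerivAt (hf k))
    exact (hm.const_mul _).congr_ab (by ring) (by ring)
  have hs := HasWD.sum hterm
  refine ⟨_, hs.congr_ab ?_ rfl⟩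
  have := pascal_sum (fun j => h j z) (fun k => iteratedDeriv k f z) q
  rw [gsum]
  rw [← this]

lemma leibniz {U : Set ℂ} (hU : IsOpen U) {f : ℂ → ℂ}
    (hf : ∀ k, ∀ z ∈ U, HasDerivAt (iteratedDeriv k f) (iteratedDeriv (k+1) f z) z)
    (h : ℕ → ℂ → ℂ) (hh : ∀ j w, ∃ b, HasWD (h j) (h (j+1) w) b w) :
    ∀ n, ∀ z ∈ U, wdz^[n] (fun w => h 0 w * f w) z = gsum h f n z := by
  intro n
  induction n with
  | zero =>
    intro z hz
    simp [gsum]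
  | succ n ih =>
    intro z hz
    rw [Function.iterate_succ_apply']
    have hev : wdz^[n] (fun w => h 0 w * f w) =ᶠ[nhds z] gsum h f n :=
      Filter.eventually_of_mem (hU.mem_nhds hz) (fun w hw => ih w hw)
    rw [wdz_congr hev]
    obtain ⟨b, hb⟩ := step_lemma h hh f z (fun k => hf k z hz) n
    exact hb.wdz_eq

end Main

section Part3
variable (α : ℝ)

lemma iter_wdz_Efun : ∀ q, wdz^[q] (Efun α) = efam α q := by
  intro q
  induction q with
  | zero => funext w; simp [efam]
  | succ q ih =>
    rw [Function.iterate_succ_apply', ih]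
    funext w
    exact (hasWD_efam α q w).choose_spec.wdz_eq

lemma hasWD_gsum_mono (c : ℂ) (a q : ℕ) (z : ℂ) :
    ∃ b, HasWD (gsum (efam α) (fun w => c * w^a) q)
      (gsum (efam α) (fun w => c * w^a) (q+1) z) b z :=
  step_lemma (efam α) (hasWD_efam α) _ z (fun k => hasDerivAt_iteratedDeriv_cpow c a k z) q

lemma wdzbar_conj_eq {g : ℂ → ℂ} {a b z : ℂ} (hg : HasWD g a b z) :
    wdzbar (fun w => (starRingEnd ℂ) (g w)) z = (starRingEnd ℂ) (wdz g z) := by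
  rw [hg.star.wdzbar_eq, hg.wdz_eq]

lemma sigma_efam (q : ℕ) :
    (fun w => (starRingEnd ℂ) (efam α q w))
      = fun w => efam α 0 w * ((fun w : ℂ => (-(α:ℂ))^q * w^q) w) := by
  funext w
  simp [efam, conj_Efun, map_pow, map_mul, mul_pow]
  ring

lemma claimA (q m : ℕ) :
    wdz^[m] (fun w => (starRingEnd ℂ) (efam α q w))
      = gsum (efam α) (fun w : ℂ => (-(α:ℂ))^q * w^q) m := by
  rw [sigma_efam]
  funext z
  exact leibniz isOpen_univ
    (fun k z _ => hasDerivAt_iteratedDeriv_cpow _ _ k z)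
    (efam α) (hasWD_efam α) m z trivial

lemma claimB (q : ℕ) : ∀ m, wdzbar^[m] (efam α q)
    = fun z => (starRingEnd ℂ) (wdz^[m] (fun w => (starRingEnd ℂ) (efam α q w)) z) := by
  intro m
  induction m with
  | zero => funext w; simp
  | succ m ih =>
    funext z
    rw [Function.iterate_succ_apply', ih]
    have hW := claimA α q m
    conv_rhs => rw [Function.iterate_succ_apply']
    rw [hW]
    obtain ⟨b', hWD⟩ := hasWD_gsum_mono α ((-(α:ℂ))^q) q m z
    rw [← wdzbar_conj_eq hWD]

lemma negone_sq (t : ℕ) : ((-1:ℂ))^t * ((-1:ℂ))^t = 1 := by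
  rw [← mul_pow]; norm_num

lemma descF_eq (n j : ℕ) : n.descFactorial j = n.choose j * j.factorial := by
  rw [Nat.choose_eq_descFactorial_div_factorial,
    Nat.div_mul_cancel (Nat.factorial_dvd_descFactorial n j)]

lemma combin (j a b : ℕ) :
    (j+a).choose j * (j+b).descFactorial j = (j+b).choose j * (j+a).descFactorial j := by
  rw [descF_eq, descF_eq]
  ring

lemma core (m q : ℕ) (u v A : ℂ) :
    A^m * (-1:ℂ)^q * (∑ j ∈ Finset.range (q+1),
        (q.choose j:ℂ) * ((-A*v)^(q-j) * ((m.descFactorial j : ℂ) * u^(m-j))))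
    = (-1:ℂ)^(m+q) * (∑ j ∈ Finset.range (m+1),
        (m.choose j:ℂ) * ((-A*u)^(m-j) * ((-A)^q * ((q.descFactorial j:ℂ) * v^(q-j))))) := by
  have hsub1 : Finset.range (q+1) ⊆ Finset.range (m+q+2) := by
    rw [Finset.range_subset_range]; omega
  have hsub2 : Finset.range (m+1) ⊆ Finset.range (m+q+2) := by
    rw [Finset.range_subset_range]; omega
  rw [Finset.sum_subset hsub1 (by
    intro x _ hx
    have : q < x := by simpa using hx
    simp [Nat.choose_eq_zero_of_lt this])]
  rw [Finset.sum_subset hsub2 (by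
    intro x _ hx
    have : m < x := by simpa using hx
    simp [Nat.choose_eq_zero_of_lt this])]
  rw [Finset.mul_sum, Finset.mul_sum]
  apply Finset.sum_congr rfl
  intro j hj
  by_cases h1 : q < j
  · simp [Nat.choose_eq_zero_of_lt h1, Nat.descFactorial_eq_zero_iff_lt.mpr h1]
  by_cases h2 : m < j
  · simp [Nat.choose_eq_zero_of_lt h2, Nat.descFactorial_eq_zero_iff_lt.mpr h2]
  push_neg at h1 h2
  obtain ⟨a, rfl⟩ := Nat.exists_eq_add_of_le h1
  obtain ⟨b, rfl⟩ := Nat.exists_eq_add_of_le h2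
  simp only [Nat.add_sub_cancel_left]
  have hC : ((j+a).choose j : ℂ) * ((j+b).descFactorial j : ℂ)
      = ((j+b).choose j : ℂ) * ((j+a).descFactorial j : ℂ) := by
    exact_mod_cast congrArg (Nat.cast (R := ℂ)) (combin j a b)
  have hv : (-A*v)^a = (-1:ℂ)^a * (A^a * v^a) := by
    rw [show (-A*v) = (-1)*(A*v) by ring, mul_pow, mul_pow]
  have hu : (-A*u)^b = (-1:ℂ)^b * (A^b * u^b) := by
    rw [show (-A*u) = (-1)*(A*u) by ring, mul_pow, mul_pow]
  have hA : (-A)^(j+a) = (-1:ℂ)^(j+a) * A^(j+a) := by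
    rw [show (-A) = (-1)*A by ring, mul_pow]
  rw [hv, hu, hA]
  have hX := negone_sq j
  have hW := negone_sq b
  linear_combination ((-1:ℂ)^j * ((-1:ℂ)^a)^2 * (A^j*A^a*A^b*u^b*v^a)) * hC
    - ((-1:ℂ)^j * ((-1:ℂ)^a)^2 * (A^j*A^a*A^b*u^b*v^a) * (((j+b).choose j : ℂ) * (((j+a).descFactorial j : ℕ) : ℂ))) * hX
    - (((-1:ℂ)^j)^3 * ((-1:ℂ)^a)^2 * (A^j*A^a*A^b*u^b*v^a) * (((j+b).choose j : ℂ) * (((j+a).descFactorial j : ℕ) : ℂ))) * hW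

end Part3

section Bridge
variable (α : ℝ)

lemma bridge (m q : ℕ) (z : ℂ) :
    IH α m q z = (α:ℂ)^m * (-1:ℂ)^q * Complex.exp ((α:ℂ) * ((‖z‖ : ℝ) : ℂ)^2)
      * gsum (efam α) (fun w => (1:ℂ) * w^m) q z := by
  have h0 : IH α m q z = (-1:ℂ)^(m+q) * Complex.exp ((α:ℂ) * ((‖z‖ : ℝ) : ℂ)^2)
      * (wdzbar^[m] (wdz^[q] (Efun α))) z := rfl
  rw [h0, iter_wdz_Efun, claimB, claimA]
  simp only [gsum]
  simp only [iteratedDeriv_cpow]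
  rw [map_sum]
  have hconjterm : ∀ j, (starRingEnd ℂ) ((((m.choose j : ℕ)):ℂ) *
        (efam α (m-j) z * ((-(α:ℂ))^q * ((q.descFactorial j : ℕ):ℂ) * z^(q-j))))
      = ((m.choose j : ℕ):ℂ) * ((-(α:ℂ) * z)^(m-j) *
          ((-(α:ℂ))^q * (((q.descFactorial j : ℕ):ℂ) * ((starRingEnd ℂ) z)^(q-j)))) * Efun α z := by
    intro j
    simp only [efam, map_mul, map_pow, map_neg, map_natCast, Complex.conj_conj,
      Complex.conj_ofReal, conj_Efun]
    ring
  simp only [hconjterm]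
  rw [← Finset.sum_mul]
  have hpull : ∑ k ∈ Finset.range (q+1), ((q.choose k : ℕ):ℂ) *
        (efam α (q-k) z * ((1:ℂ) * ((m.descFactorial k : ℕ):ℂ) * z^(m-k)))
      = (∑ k ∈ Finset.range (q+1), ((q.choose k : ℕ):ℂ) *
          ((-(α:ℂ) * (starRingEnd ℂ) z)^(q-k) * (((m.descFactorial k : ℕ):ℂ) * z^(m-k)))) * Efun α z := by
    rw [Finset.sum_mul]
    apply Finset.sum_congr rfl
    intro k _
    simp only [efam]
    ring
  rw [hpull]
  have final := core m q z ((starRingEnd ℂ) z) ((α:ℝ):ℂ)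
  linear_combination (-(Complex.exp ((α:ℂ) * ((‖z‖ : ℝ) : ℂ)^2) * Efun α z)) * final

end Bridge

noncomputable def Gm (α : ℝ) (m : ℕ) : ℕ → ℂ → ℂ :=
  fun j => gsum (efam α) (fun w => (1:ℂ) * w^m) j

lemma hhGm (α : ℝ) (m : ℕ) : ∀ j w, ∃ b, HasWD (Gm α m j) (Gm α m (j+1) w) b w :=
  fun j w => hasWD_gsum_mono α 1 m j w


theorem stmt15 (α : ℝ) (hα : 0 < α) (m n : ℕ) (U : Set ℂ) (hU : IsOpen U)
    (f : ℂ → ℂ) (hf : DifferentiableOn ℂ f U) (z : ℂ) (hz : z ∈ U) :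
    (-1:ℂ)^n * Complex.exp (α * ‖z‖^2) *
        (wdz^[n] (fun w => w^m * Complex.exp (-(α * ‖w‖^2)) * f w)) z =
      (n.factorial : ℂ) / (α:ℂ)^m * ∑ k ∈ Finset.range (n+1),
        (-1:ℂ)^k / ((k.factorial : ℂ) * ((n-k).factorial : ℂ)) * IH α m (n-k) z *
          iteratedDeriv k f z := by
  have hf' := holo_hasDerivAt hU hf
  have hl := leibniz hU hf' (Gm α m) (hhGm α m) n z hz
  have hF : (fun w : ℂ => w^m * Complex.exp (-(α * ‖w‖^2)) * f w)
      = fun w => Gm α m 0 w * f w := by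
    funext w
    simp only [Gm, gsum]
    rw [Finset.sum_range_one]
    simp only [Nat.choose_self, Nat.cast_one, Nat.sub_self, iteratedDeriv_zero,
      efam, Efun, pow_zero, one_mul]
    ring
  rw [hF, hl]
  simp only [gsum]
  rw [Finset.mul_sum, Finset.mul_sum]
  apply Finset.sum_congr rfl
  intro k hk
  have hkn : k ≤ n := Nat.lt_succ_iff.mp (Finset.mem_range.mp hk)
  rw [bridge α m (n-k) z]
  simp only [Gm]
  have hA : ((α:ℂ))^m ≠ 0 := pow_ne_zero _ (by exact_mod_cast hα.ne')
  have hfk : ((k.factorial : ℕ) : ℂ) ≠ 0 := Nat.cast_ne_zero.mpr (Nat.factorial_ne_zero _)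
  have hfnk : (((n-k).factorial : ℕ) : ℂ) ≠ 0 := Nat.cast_ne_zero.mpr (Nat.factorial_ne_zero _)
  have hs : (-1:ℂ)^k * (-1:ℂ)^(n-k) = (-1:ℂ)^n := by
    rw [← pow_add]; congr 1; omega
  rw [Nat.cast_choose ℂ hkn]
  field_simp
  linear_combination (-((n.factorial : ℂ) * gsum (efam α) (fun w => w^m) (n-k) z * iteratedDeriv k f z)) * hs
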